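/- Let 𝕂 be a non-discrete Hausdorff topological field and A a topological unital 𝕂-algebra whose unit group Aˣ is open and whose inversion map is continuous. Then inversion i : Aˣ → A is C¹ in the BGN sense, with difference-quotient map i¹(x,v,t) = −x⁻¹ • v • (x + t•v)⁻¹ for (x,v,t) with x, x+t•v ∈ Aˣ; in particular di(x)v = −x⁻¹ v x⁻¹. -/

import Mathlib

/-- In a topological unital `𝕂`-algebra with open unit group and continuous inversion,
inversion is C¹ in the BGN sense, with difference-quotient map
`i¹(x,v,t) = -x⁻¹ • v • (x + t•v)⁻¹`; in particular `di(x)v = -x⁻¹ v x⁻¹`. -/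
theorem stmt_2 (𝕂 : Type*) [Field 𝕂] [TopologicalSpace 𝕂] [IsTopologicalRing 𝕂] [T2Space 𝕂]
    (hK : Dense {t : 𝕂 | t ≠ 0})
    (A : Type*) [Ring A] [Algebra 𝕂 A] [TopologicalSpace A] [IsTopologicalRing A] [T2Space A]
    [ContinuousSMul 𝕂 A]
    (hopen : IsOpen {x : A | IsUnit x})
    (hinv : ContinuousOn (Ring.inverse : A → A) {x : A | IsUnit x}) :
    -- the candidate difference-quotient map is continuous on (Aˣ)⁽¹⁾:
    ContinuousOn (fun p : A × A × 𝕂 =>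
        -(Ring.inverse p.1 * p.2.1 * Ring.inverse (p.1 + p.2.2 • p.2.1)))
      {p : A × A × 𝕂 | IsUnit p.1 ∧ IsUnit (p.1 + p.2.2 • p.2.1)} ∧
    -- and it satisfies the defining identity of a BGN difference-quotient map of inversion:
    (∀ (x v : A) (t : 𝕂), IsUnit x → IsUnit (x + t • v) →
      Ring.inverse (x + t • v) - Ring.inverse x
        = t • (-(Ring.inverse x * v * Ring.inverse (x + t • v)))) ∧
    -- in particular `di(x)v = -x⁻¹ v x⁻¹`:
    (∀ x v : A, IsUnit x →
      -(Ring.inverse x * v * Ring.inverse (x + (0 : 𝕂) • v))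
        = -(Ring.inverse x * v * Ring.inverse x)) := by
  refine ⟨?_, ?_, ?_⟩
  · have h1 : ContinuousOn (fun p : A × A × 𝕂 => Ring.inverse p.1)
        {p : A × A × 𝕂 | IsUnit p.1 ∧ IsUnit (p.1 + p.2.2 • p.2.1)} :=
      hinv.comp continuous_fst.continuousOn (fun p hp => hp.1)
    have h2 : ContinuousOn (fun p : A × A × 𝕂 => Ring.inverse (p.1 + p.2.2 • p.2.1))
        {p : A × A × 𝕂 | IsUnit p.1 ∧ IsUnit (p.1 + p.2.2 • p.2.1)} := by
      refine hinv.comp ?_ (fun p hp => hp.2)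
      exact (continuous_fst.add ((continuous_snd.snd).smul (continuous_snd.fst))).continuousOn
    exact ((h1.mul (continuous_snd.fst).continuousOn).mul h2).neg
  · intro x v t hx hy
    set y := x + t • v with hydef
    have e1 : Ring.inverse x * y * Ring.inverse y = Ring.inverse x := by
      rw [mul_assoc, Ring.mul_inverse_cancel _ hy, mul_one]
    have e2 : Ring.inverse x * x * Ring.inverse y = Ring.inverse y := by
      rw [Ring.inverse_mul_cancel _ hx, one_mul]
    have e3 : Ring.inverse x * (t • v) * Ring.inverse y
        = Ring.inverse x - Ring.inverse y := by
      have : (t • v : A) = y - x := by rw [hydef]; abel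
      rw [this, mul_sub, sub_mul, e1, e2]
    have e4 : Ring.inverse x * (t • v) * Ring.inverse y
        = t • (Ring.inverse x * v * Ring.inverse y) := by
      rw [mul_smul_comm, smul_mul_assoc]
    rw [smul_neg, ← e4, e3, neg_sub]
  · intro x v hx
    rw [zero_smul, add_zero]
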